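/- Let F, G : ℝ⁵ → ℝ be continuously differentiable functions and let M = {(x, y, z, p, r, q, s) ∈ ℝ⁷ : q = F(x, y, z, p, r) and s = G(x, y, z, p, r)}. Consider the six vector fields on ℝ⁷: Y₁ = ∂_x, Y₂ = ∂_y, Y₃ = ∂_z, Y₄ = x·∂_y + ∂_p, Y₅ = y·∂_z + p·∂_r + q·∂_s, and Y₆ = y·∂_x − p²·∂_p − pr·∂_r − 3pq·∂_q − (qr + 2ps)·∂_s. If for each i = 1, …, 6 the directional derivatives of both functions q − F(x, y, z, p, r) and s − G(x, y, z, p, r) along Y_i vanish at every point of M, then F and G are identically zero. -/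

import Mathlib

set_option maxHeartbeats 1000000
set_option synthInstance.maxHeartbeats 400000

noncomputable section

private def pi75 : (Fin 7 → ℝ) →L[ℝ] (Fin 5 → ℝ) :=
  ContinuousLinearMap.pi ![ContinuousLinearMap.proj 0, ContinuousLinearMap.proj 1,
    ContinuousLinearMap.proj 2, ContinuousLinearMap.proj 3, ContinuousLinearMap.proj 4]

private lemma pi75_eq (u : Fin 7 → ℝ) : ![u 0, u 1, u 2, u 3, u 4] = pi75 u := by
  funext i; fin_cases i <;> rfl

private lemma fderiv_key (F : (Fin 5 → ℝ) → ℝ) (hF : ContDiff ℝ 1 F) (j : Fin 7)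
    (w y : Fin 7 → ℝ) :
    fderiv ℝ (fun u => u j - F ![u 0, u 1, u 2, u 3, u 4]) w y
      = y j - fderiv ℝ F ![w 0, w 1, w 2, w 3, w 4] ![y 0, y 1, y 2, y 3, y 4] := by
  have hfun : (fun u : Fin 7 → ℝ => u j - F ![u 0, u 1, u 2, u 3, u 4])
      = fun u => u j - F (pi75 u) := by
    funext u; rw [pi75_eq]
  have h2 : HasFDerivAt F (fderiv ℝ F (pi75 w)) (pi75 w) :=
    ((hF.differentiable one_ne_zero) (pi75 w)).hasFDerivAt
  have h3 := h2.comp w pi75.hasFDerivAt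
  have hd : HasFDerivAt (fun u : Fin 7 → ℝ => u j - F (pi75 u))
      (ContinuousLinearMap.proj j - (fderiv ℝ F (pi75 w)).comp pi75) w :=
    (ContinuousLinearMap.proj j).hasFDerivAt.sub h3
  rw [hfun, hd.fderiv, pi75_eq w, pi75_eq y]
  simp

private lemma zero_off_p (F : (Fin 5 → ℝ) → ℝ) (hF : Continuous F)
    (h : ∀ v, v 3 ≠ 0 → F v = 0) : ∀ v, F v = 0 := by
  intro v
  have hg : Continuous fun t : ℝ => F (Function.update v 3 t) :=
    hF.comp (continuous_const.update 3 continuous_id)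
  have he : (fun t : ℝ => F (Function.update v 3 t)) = fun _ => 0 := by
    apply Continuous.ext_on (dense_compl_singleton (0:ℝ)) hg continuous_const
    intro t ht
    exact h _ (by simpa using ht)
  have := congrFun he (v 3)
  simpa [Function.update_eq_self] using this

/-- If the submanifold `q = F(x, y, z, p, r)`, `s = G(x, y, z, p, r)` of `ℝ⁷` (the second
prolongation space of `ℝ³`, with `p = y'`, `r = z'`, `q = y''`, `s = z''`) is invariant
under the six vector fields `∂_x`, `∂_y`, `∂_z`, `x ∂_y + ∂_p`, `y ∂_z + p ∂_r + q ∂_s`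
and `y ∂_x − p² ∂_p − p r ∂_r − 3 p q ∂_q − (q r + 2 p s) ∂_s` (second prolongations of
generators of the `sl(4, ℝ)` symmetry algebra of `y'' = 0 = z''`), then `F ≡ 0` and
`G ≡ 0`, i.e. the system is `y'' = 0 = z''`. -/
theorem sl4_invariant_second_order_system_is_trivial
    (F G : (Fin 5 → ℝ) → ℝ) (hF : ContDiff ℝ 1 F) (hG : ContDiff ℝ 1 G)
    (M : Set (Fin 7 → ℝ))
    (hM : M = {w | w 5 = F ![w 0, w 1, w 2, w 3, w 4] ∧ w 6 = G ![w 0, w 1, w 2, w 3, w 4]})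
    (Y : Fin 6 → ((Fin 7 → ℝ) → (Fin 7 → ℝ)))
    (hY : Y = ![fun _ => ![1, 0, 0, 0, 0, 0, 0], fun _ => ![0, 1, 0, 0, 0, 0, 0],
      fun _ => ![0, 0, 1, 0, 0, 0, 0],
      fun w => ![0, w 0, 0, 1, 0, 0, 0],
      fun w => ![0, 0, w 1, 0, w 3, 0, w 5],
      fun w => ![w 1, 0, 0, -(w 3 ^ 2), -(w 3 * w 4), -(3 * w 3 * w 5),
        -(w 5 * w 4 + 2 * w 3 * w 6)]])
    (hinv : ∀ i : Fin 6, ∀ w ∈ M,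
      fderiv ℝ (fun u => u 5 - F ![u 0, u 1, u 2, u 3, u 4]) w (Y i w) = 0 ∧
      fderiv ℝ (fun u => u 6 - G ![u 0, u 1, u 2, u 3, u 4]) w (Y i w) = 0) :
    ∀ v, F v = 0 ∧ G v = 0 := by
  subst hY hM
  -- decomposition lemmas for vectors in Fin 5 → ℝ
  have dec4 : ∀ a : ℝ, (![0, a, 0, 1, 0] : Fin 5 → ℝ)
      = a • ![0,1,0,0,0] + ![0,0,0,1,0] := by
    intro a; funext i; fin_cases i <;> simp
  have dec5 : ∀ a b : ℝ, (![0, 0, a, 0, b] : Fin 5 → ℝ)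
      = a • ![0,0,1,0,0] + b • ![0,0,0,0,1] := by
    intro a b; funext i; fin_cases i <;> simp
  have dec6 : ∀ a b c : ℝ, (![a, 0, 0, -(b ^ 2), -(b * c)] : Fin 5 → ℝ)
      = a • ![1,0,0,0,0] + (-(b ^ 2)) • ![0,0,0,1,0] + (-(b * c)) • ![0,0,0,0,1] := by
    intro a b c; funext i; fin_cases i <;> simp
  have keyF : ∀ v : Fin 5 → ℝ, v 3 ≠ 0 → F v = 0 := by
    intro v hp
    set w : Fin 7 → ℝ := ![v 0, v 1, v 2, v 3, v 4, F v, G v] with hwdef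
    have hv5 : (![w 0, w 1, w 2, w 3, w 4] : Fin 5 → ℝ) = v := by
      funext i; fin_cases i <;> (rw [hwdef]; rfl)
    have hw : w ∈ {w : Fin 7 → ℝ | w 5 = F ![w 0, w 1, w 2, w 3, w 4]
        ∧ w 6 = G ![w 0, w 1, w 2, w 3, w 4]} := by
      constructor
      · show w 5 = F ![w 0, w 1, w 2, w 3, w 4]; rw [hv5, hwdef]; rfl
      · show w 6 = G ![w 0, w 1, w 2, w 3, w 4]; rw [hv5, hwdef]; rfl
    have e1 : (0:ℝ) - fderiv ℝ F v ![1,0,0,0,0] = 0 := by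
      have h := (hinv 0 w hw).1; rw [fderiv_key F hF, hv5] at h; exact h
    have e2 : (0:ℝ) - fderiv ℝ F v ![0,1,0,0,0] = 0 := by
      have h := (hinv 1 w hw).1; rw [fderiv_key F hF, hv5] at h; exact h
    have e3 : (0:ℝ) - fderiv ℝ F v ![0,0,1,0,0] = 0 := by
      have h := (hinv 2 w hw).1; rw [fderiv_key F hF, hv5] at h; exact h
    have e4 : (0:ℝ) - fderiv ℝ F v ![0, v 0, 0, 1, 0] = 0 := by
      have h := (hinv 3 w hw).1; rw [fderiv_key F hF, hv5] at h; exact h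
    have e5 : (0:ℝ) - fderiv ℝ F v ![0, 0, v 1, 0, v 3] = 0 := by
      have h := (hinv 4 w hw).1; rw [fderiv_key F hF, hv5] at h; exact h
    have e6 : -(3 * v 3 * F v)
        - fderiv ℝ F v ![v 1, 0, 0, -(v 3 ^ 2), -(v 3 * v 4)] = 0 := by
      have h := (hinv 5 w hw).1; rw [fderiv_key F hF, hv5] at h; exact h
    have d1 : fderiv ℝ F v ![1,0,0,0,0] = 0 := by linarith
    have d2 : fderiv ℝ F v ![0,1,0,0,0] = 0 := by linarith
    have d3 : fderiv ℝ F v ![0,0,1,0,0] = 0 := by linarith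
    have d4 : fderiv ℝ F v ![0,0,0,1,0] = 0 := by
      rw [dec4 (v 0), map_add, map_smul] at e4
      simp only [smul_eq_mul, d2, mul_zero, zero_add, zero_sub, neg_eq_zero] at e4
      exact e4
    have d5 : v 3 * fderiv ℝ F v ![0,0,0,0,1] = 0 := by
      rw [dec5 (v 1) (v 3), map_add, map_smul, map_smul] at e5
      simp only [smul_eq_mul, d3, mul_zero, zero_add, zero_sub, neg_eq_zero] at e5
      exact e5
    rw [dec6 (v 1) (v 3) (v 4), map_add, map_add, map_smul, map_smul, map_smul] at e6
    simp only [smul_eq_mul, d1, d4, mul_zero, zero_add, add_zero] at e6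
    have h64 : -(v 3 * v 4) * fderiv ℝ F v ![0,0,0,0,1] = 0 := by
      have : -(v 3 * v 4) * fderiv ℝ F v ![0,0,0,0,1]
          = -(v 4) * (v 3 * fderiv ℝ F v ![0,0,0,0,1]) := by ring
      rw [this, d5, mul_zero]
    have h3p : v 3 * F v = 0 := by linarith
    exact (mul_eq_zero.mp h3p).resolve_left hp
  have hF0 : ∀ u, F u = 0 := zero_off_p F hF.continuous keyF
  have keyG : ∀ v : Fin 5 → ℝ, v 3 ≠ 0 → G v = 0 := by
    intro v hp
    set w : Fin 7 → ℝ := ![v 0, v 1, v 2, v 3, v 4, F v, G v] with hwdef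
    have hv5 : (![w 0, w 1, w 2, w 3, w 4] : Fin 5 → ℝ) = v := by
      funext i; fin_cases i <;> (rw [hwdef]; rfl)
    have hw : w ∈ {w : Fin 7 → ℝ | w 5 = F ![w 0, w 1, w 2, w 3, w 4]
        ∧ w 6 = G ![w 0, w 1, w 2, w 3, w 4]} := by
      constructor
      · show w 5 = F ![w 0, w 1, w 2, w 3, w 4]; rw [hv5, hwdef]; rfl
      · show w 6 = G ![w 0, w 1, w 2, w 3, w 4]; rw [hv5, hwdef]; rfl
    have e1 : (0:ℝ) - fderiv ℝ G v ![1,0,0,0,0] = 0 := by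
      have h := (hinv 0 w hw).2; rw [fderiv_key G hG, hv5] at h; exact h
    have e2 : (0:ℝ) - fderiv ℝ G v ![0,1,0,0,0] = 0 := by
      have h := (hinv 1 w hw).2; rw [fderiv_key G hG, hv5] at h; exact h
    have e3 : (0:ℝ) - fderiv ℝ G v ![0,0,1,0,0] = 0 := by
      have h := (hinv 2 w hw).2; rw [fderiv_key G hG, hv5] at h; exact h
    have e4 : (0:ℝ) - fderiv ℝ G v ![0, v 0, 0, 1, 0] = 0 := by
      have h := (hinv 3 w hw).2; rw [fderiv_key G hG, hv5] at h; exact h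
    have e5 : F v - fderiv ℝ G v ![0, 0, v 1, 0, v 3] = 0 := by
      have h := (hinv 4 w hw).2; rw [fderiv_key G hG, hv5] at h; exact h
    have e6 : -(F v * v 4 + 2 * v 3 * G v)
        - fderiv ℝ G v ![v 1, 0, 0, -(v 3 ^ 2), -(v 3 * v 4)] = 0 := by
      have h := (hinv 5 w hw).2; rw [fderiv_key G hG, hv5] at h; exact h
    have d1 : fderiv ℝ G v ![1,0,0,0,0] = 0 := by linarith
    have d2 : fderiv ℝ G v ![0,1,0,0,0] = 0 := by linarith
    have d3 : fderiv ℝ G v ![0,0,1,0,0] = 0 := by linarith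
    have d4 : fderiv ℝ G v ![0,0,0,1,0] = 0 := by
      rw [dec4 (v 0), map_add, map_smul] at e4
      simp only [smul_eq_mul, d2, mul_zero, zero_add, zero_sub, neg_eq_zero] at e4
      exact e4
    rw [hF0 v] at e5 e6
    have d5 : v 3 * fderiv ℝ G v ![0,0,0,0,1] = 0 := by
      rw [dec5 (v 1) (v 3), map_add, map_smul, map_smul] at e5
      simp only [smul_eq_mul, d3, mul_zero, zero_add, zero_sub, neg_eq_zero] at e5
      exact e5
    rw [dec6 (v 1) (v 3) (v 4), map_add, map_add, map_smul, map_smul, map_smul] at e6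
    simp only [smul_eq_mul, d1, d4, mul_zero, zero_add, add_zero, zero_mul] at e6
    have h64 : -(v 3 * v 4) * fderiv ℝ G v ![0,0,0,0,1] = 0 := by
      have : -(v 3 * v 4) * fderiv ℝ G v ![0,0,0,0,1]
          = -(v 4) * (v 3 * fderiv ℝ G v ![0,0,0,0,1]) := by ring
      rw [this, d5, mul_zero]
    have h2p : v 3 * G v = 0 := by linarith
    exact (mul_eq_zero.mp h2p).resolve_left hp
  have hG0 : ∀ u, G u = 0 := zero_off_p G hG.continuous keyG
  exact fun v => ⟨hF0 v, hG0 v⟩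

end
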